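/- Let λ > 0 and S(ξ) = √(2/λ)/cosh(ξ), and let P be a polynomial with real coefficients. Then: (i) there exists a polynomial Q with real coefficients such that the function σ(ξ) := S(ξ)·Q(S(ξ)²) satisfies σ''(ξ) − σ(ξ) + (6/cosh²ξ)·σ(ξ) = S(ξ)³·P(S(ξ)²) for all ξ ∈ ℝ; and (ii) if σ̃ : ℝ → ℝ is any twice continuously differentiable even function with σ̃(ξ) → 0 as ξ → ±∞ satisfying the same equation σ̃'' − σ̃ + (6/cosh²ξ)·σ̃ = S³·P(S²), then σ̃ = σ. -/

import Mathlib

open Polynomial Real Filter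
open scoped NNReal
noncomputable section
namespace L5


def opA (lam : ℝ) (Q : ℝ[X]) : ℝ[X] :=
  4 * X ^ 2 * Q.derivative.derivative + 8 * X * Q.derivative
    + C lam * X * (2 * Q - 5 * X * Q.derivative - 2 * X ^ 2 * Q.derivative.derivative)

lemma opA_add (lam : ℝ) (Q R : ℝ[X]) : opA lam (Q + R) = opA lam Q + opA lam R := by
  simp only [opA, derivative_add]; ring

lemma opA_monomial (lam c : ℝ) (m : ℕ) :
    opA lam (C c * X ^ m)
      = X * (C (4 * m * (m + 1) * c) * X ^ (m - 1)
          + C (lam * (2 - 3 * m - 2 * (m:ℝ) ^ 2) * c) * X ^ m) := by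
  match m with
  | 0 => simp [opA, map_ofNat]; ring
  | 1 => simp [opA, map_ofNat]; ring
  | (n+2) =>
    simp only [opA, derivative_C_mul_X_pow]
    push_cast
    simp only [C_mul, C_add, C_sub, map_ofNat, C_eq_natCast, C_1, pow_succ]
    push_cast
    ring_nf
    simp only [C_1, map_one]
    ring

lemma exists_Q (lam : ℝ) (hlam : lam ≠ 0) :
    ∀ n : ℕ, ∀ P : ℝ[X], P.natDegree ≤ n → ∃ Q : ℝ[X], opA lam Q = X * P := by
  intro n
  induction n with
  | zero =>
    intro P hP
    set a := P.coeff 0 with ha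
    refine ⟨C (a / (2 * lam)), ?_⟩
    have h0 := opA_monomial lam (a / (2 * lam)) 0
    simp only [pow_zero, mul_one, Nat.cast_zero] at h0
    rw [h0, Polynomial.eq_C_of_natDegree_le_zero hP, ← ha]
    have h1 : (4:ℝ) * 0 * (0 + 1) * (a / (2 * lam)) = 0 := by ring
    have h2 : lam * (2 - 3 * 0 - 2 * (0:ℝ) ^ 2) * (a / (2 * lam)) = a := by
      field_simp; ring
    rw [h1, h2]
    simp
  | succ n ih =>
    intro P hP
    set m : ℕ := n + 1 with hm
    have he : lam * (2 - 3 * m - 2 * (m:ℝ) ^ 2) ≠ 0 := by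
      apply mul_ne_zero hlam
      have : (1:ℝ) ≤ (m:ℝ) := by exact_mod_cast Nat.one_le_iff_ne_zero.mpr (by omega)
      nlinarith
    set c : ℝ := P.coeff m / (lam * (2 - 3 * m - 2 * (m:ℝ) ^ 2)) with hc
    set P₁ : ℝ[X] := P - C (P.coeff m) * X ^ m - C (4 * m * (m + 1) * c) * X ^ (m - 1) with hP₁
    have hdeg : P₁.natDegree ≤ n := by
      apply Polynomial.natDegree_le_iff_coeff_eq_zero.mpr
      intro k hk
      simp only [hP₁, Polynomial.coeff_sub, Polynomial.coeff_C_mul, Polynomial.coeff_X_pow]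
      rcases eq_or_lt_of_le (Nat.succ_le_of_lt hk) with h | h
      · rw [← h]
        simp [hm]
      · have h1 : P.coeff k = 0 := Polynomial.coeff_eq_zero_of_natDegree_lt (lt_of_le_of_lt hP h)
        have h2 : k ≠ m := by omega
        have h3 : k ≠ m - 1 := by omega
        have h4 : k ≠ n := by omega
        simp [h1, h2, h3, h4]
    obtain ⟨Q₁, hQ₁⟩ := ih P₁ hdeg
    refine ⟨C c * X ^ m + Q₁, ?_⟩
    rw [opA_add, hQ₁, opA_monomial]
    have hcc : lam * (2 - 3 * m - 2 * (m:ℝ) ^ 2) * c = P.coeff m := by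
      rw [hc]; field_simp [right_ne_zero_of_mul he]
    rw [hcc, hP₁]
    ring

lemma opB (lam : ℝ) (Q : ℝ[X]) :
    (2 * X ^ 2 - C lam * X ^ 4) * (X * Q.comp (X ^ 2)).derivative.derivative
      + (2 * X - 2 * C lam * X ^ 3) * (X * Q.comp (X ^ 2)).derivative
      + (C (6 * lam) * X ^ 2 - 2) * (X * Q.comp (X ^ 2))
      = 2 * X * (opA lam Q).comp (X ^ 2) := by
  simp only [opA, derivative_mul, derivative_X, derivative_comp, derivative_X_pow,
    derivative_add, derivative_C, add_comp, mul_comp, X_comp, C_comp, pow_comp, sub_comp, ofNat_comp, one_mul, map_ofNat, C_eq_natCast, Nat.cast_ofNat, C_1, C_mul, derivative_ofNat]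
  push_cast
  ring


def Ufun (ξ : ℝ) : ℝ :=
  3 / (2 * Real.cosh ξ) - Real.cosh ξ / 2 - 3 / 2 * ξ * Real.sinh ξ / Real.cosh ξ ^ 2

def Vfun (ξ : ℝ) : ℝ :=
  -3 * Real.sinh ξ / Real.cosh ξ ^ 2 - Real.sinh ξ / 2
    - 3 * ξ / Real.cosh ξ ^ 3 + 3 / 2 * ξ / Real.cosh ξ

lemma Ufun_zero : Ufun 0 = 1 := by simp [Ufun]; norm_num

lemma Vfun_zero : Vfun 0 = 0 := by simp [Vfun]

lemma Ufun_hasDeriv (ξ : ℝ) : HasDerivAt Ufun (Vfun ξ) ξ := by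
  have hc := Real.cosh_pos (x := ξ)
  have hcne := hc.ne'
  have hsq : Real.sinh ξ ^ 2 = Real.cosh ξ ^ 2 - 1 := Real.sinh_sq ξ
  have h1 : HasDerivAt (fun x => 3 / (2 * Real.cosh x))
      ((0 * (2 * Real.cosh ξ) - 3 * (2 * Real.sinh ξ)) / (2 * Real.cosh ξ) ^ 2) ξ :=
    (hasDerivAt_const ξ 3).div ((Real.hasDerivAt_cosh ξ).const_mul 2) (by positivity)
  have h2 : HasDerivAt (fun x => Real.cosh x / 2) (Real.sinh ξ / 2) ξ :=
    (Real.hasDerivAt_cosh ξ).div_const 2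
  have h3n : HasDerivAt (fun x => 3 / 2 * x * Real.sinh x)
      (3 / 2 * Real.sinh ξ + 3 / 2 * ξ * Real.cosh ξ) ξ := by
    have := ((hasDerivAt_id ξ).const_mul (3/2 : ℝ)).mul (Real.hasDerivAt_sinh ξ)
    exact this.congr_deriv (by simp only [id_eq]; ring)
  have h3d : HasDerivAt (fun x => Real.cosh x ^ 2) (2 * Real.cosh ξ * Real.sinh ξ) ξ := by
    have := (Real.hasDerivAt_cosh ξ).pow 2
    exact this.congr_deriv (by ring)
  have h3 : HasDerivAt (fun x => 3 / 2 * x * Real.sinh x / Real.cosh x ^ 2)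
      (((3 / 2 * Real.sinh ξ + 3 / 2 * ξ * Real.cosh ξ) * Real.cosh ξ ^ 2
        - 3 / 2 * ξ * Real.sinh ξ * (2 * Real.cosh ξ * Real.sinh ξ)) / (Real.cosh ξ ^ 2) ^ 2) ξ :=
    h3n.div h3d (by positivity)
  have h := (h1.sub h2).sub h3
  refine h.congr_deriv (Eq.symm ?_)
  rw [Vfun]
  field_simp
  ring_nf
  linear_combination (-6 * ξ) * hsq

lemma Vfun_hasDeriv (ξ : ℝ) :
    HasDerivAt Vfun ((1 - 6 / Real.cosh ξ ^ 2) * Ufun ξ) ξ := by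
  have hc := Real.cosh_pos (x := ξ)
  have hcne := hc.ne'
  have hsq : Real.sinh ξ ^ 2 = Real.cosh ξ ^ 2 - 1 := Real.sinh_sq ξ
  have h2d : HasDerivAt (fun x => Real.cosh x ^ 2) (2 * Real.cosh ξ * Real.sinh ξ) ξ := by
    have := (Real.hasDerivAt_cosh ξ).pow 2
    exact this.congr_deriv (by ring)
  have h3d : HasDerivAt (fun x => Real.cosh x ^ 3) (3 * Real.cosh ξ ^ 2 * Real.sinh ξ) ξ := by
    have := (Real.hasDerivAt_cosh ξ).pow 3
    exact this.congr_deriv (by ring)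
  have h1 : HasDerivAt (fun x => -3 * Real.sinh x / Real.cosh x ^ 2)
      ((-3 * Real.cosh ξ * Real.cosh ξ ^ 2
        - -3 * Real.sinh ξ * (2 * Real.cosh ξ * Real.sinh ξ)) / (Real.cosh ξ ^ 2) ^ 2) ξ :=
    ((Real.hasDerivAt_sinh ξ).const_mul (-3)).div h2d (by positivity)
  have h2 : HasDerivAt (fun x => Real.sinh x / 2) (Real.cosh ξ / 2) ξ :=
    (Real.hasDerivAt_sinh ξ).div_const 2
  have h3 : HasDerivAt (fun x => 3 * x / Real.cosh x ^ 3)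
      ((3 * Real.cosh ξ ^ 3 - 3 * ξ * (3 * Real.cosh ξ ^ 2 * Real.sinh ξ))
        / (Real.cosh ξ ^ 3) ^ 2) ξ := by
    have hn : HasDerivAt (fun x : ℝ => 3 * x) 3 ξ := by
      simpa using (hasDerivAt_id ξ).const_mul (3:ℝ)
    exact hn.div h3d (by positivity)
  have h4 : HasDerivAt (fun x => 3 / 2 * x / Real.cosh x)
      ((3 / 2 * Real.cosh ξ - 3 / 2 * ξ * Real.sinh ξ) / Real.cosh ξ ^ 2) ξ := by
    have hn : HasDerivAt (fun x : ℝ => 3 / 2 * x) (3/2) ξ := by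
      simpa using (hasDerivAt_id ξ).const_mul (3/2:ℝ)
    exact hn.div (Real.hasDerivAt_cosh ξ) hcne
  have h := ((h1.sub h2).sub h3).add h4
  refine h.congr_deriv (Eq.symm ?_)
  rw [Ufun]
  field_simp
  ring_nf
  linear_combination (-12 * Real.cosh ξ) * hsq

lemma cosh_tendsto' : Tendsto Real.cosh atTop atTop := by
  apply tendsto_atTop_mono (fun x => ?_) (Real.tendsto_exp_atTop.atTop_div_const two_pos)
  rw [Real.cosh_eq]
  have := Real.exp_pos (-x)
  linarith

lemma abs_sinh_le_cosh (x : ℝ) : |Real.sinh x| ≤ Real.cosh x := by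
  rw [Real.sinh_eq, Real.cosh_eq, abs_le]
  constructor <;> nlinarith [Real.exp_pos x, Real.exp_pos (-x)]

lemma inv_cosh_le (x : ℝ) : 1 / Real.cosh x ≤ 2 * Real.exp (-x) := by
  rw [Real.cosh_eq, div_le_iff₀ (by positivity)]
  have h1 := Real.exp_pos x
  have h2 := Real.exp_pos (-x)
  have h3 : Real.exp (-x) * Real.exp x = 1 := by
    rw [← Real.exp_add]; simp
  nlinarith

lemma Ufun_tendsto : Tendsto Ufun atTop atBot := by
  have hA : Tendsto (fun ξ => 3 / (2 * Real.cosh ξ)) atTop (nhds 0) :=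
    Tendsto.div_atTop tendsto_const_nhds (cosh_tendsto'.const_mul_atTop two_pos)
  have hB : Tendsto (fun ξ : ℝ => 3 / 2 * ξ * Real.sinh ξ / Real.cosh ξ ^ 2) atTop (nhds 0) := by
    have hb : Tendsto (fun ξ : ℝ => 3 * (ξ ^ 1 * Real.exp (-ξ))) atTop (nhds 0) := by
      have := (Real.tendsto_pow_mul_exp_neg_atTop_nhds_zero 1).const_mul (3:ℝ)
      simpa using this
    apply squeeze_zero_norm' (a := fun ξ : ℝ => 3 * (ξ ^ 1 * Real.exp (-ξ))) ?_ hb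
    filter_upwards [eventually_ge_atTop (0:ℝ)] with x hx
    have hc := Real.cosh_pos (x := x)
    have h1 : |3 / 2 * x * Real.sinh x / Real.cosh x ^ 2|
        = 3 / 2 * x * |Real.sinh x| / Real.cosh x ^ 2 := by
      rw [abs_div, abs_mul, abs_of_nonneg (by linarith : (0:ℝ) ≤ 3/2 * x),
        abs_of_pos (by positivity : (0:ℝ) < Real.cosh x ^ 2)]
    rw [Real.norm_eq_abs, h1, pow_one]
    have h2 : 3 / 2 * x * |Real.sinh x| / Real.cosh x ^ 2 ≤ 3 / 2 * x * Real.cosh x / Real.cosh x ^ 2 := by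
      apply div_le_div_of_nonneg_right ?_ (by positivity)
      · exact mul_le_mul_of_nonneg_left (abs_sinh_le_cosh x) (by linarith)
    have h3 : 3 / 2 * x * Real.cosh x / Real.cosh x ^ 2 = 3 / 2 * x * (1 / Real.cosh x) := by
      field_simp
    have h4 : 3 / 2 * x * (1 / Real.cosh x) ≤ 3 / 2 * x * (2 * Real.exp (-x)) :=
      mul_le_mul_of_nonneg_left (inv_cosh_le x) (by linarith)
    calc 3 / 2 * x * |Real.sinh x| / Real.cosh x ^ 2
        ≤ 3 / 2 * x * Real.cosh x / Real.cosh x ^ 2 := h2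
      _ = 3 / 2 * x * (1 / Real.cosh x) := h3
      _ ≤ 3 / 2 * x * (2 * Real.exp (-x)) := h4
      _ = 3 * (x * Real.exp (-x)) := by ring
  have hC : Tendsto (fun ξ => -(Real.cosh ξ / 2)) atTop atBot :=
    tendsto_neg_atTop_atBot.comp (cosh_tendsto'.atTop_div_const two_pos)
  have h := (hA.sub hB).add_atBot hC
  have hfun : (fun ξ => (3 / (2 * Real.cosh ξ) - 3 / 2 * ξ * Real.sinh ξ / Real.cosh ξ ^ 2)
      + -(Real.cosh ξ / 2)) = Ufun := by
    funext ξ; rw [Ufun]; ring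
  rwa [hfun] at h


variable {lam : ℝ} (hlam : 0 < lam) {S : ℝ → ℝ}
  (hS : ∀ ξ, S ξ = Real.sqrt (2 / lam) / Real.cosh ξ)

include hlam hS

lemma S_sq (ξ : ℝ) : lam * S ξ ^ 2 = 2 / Real.cosh ξ ^ 2 := by
  have h0 := hlam.ne'
  have hc := (Real.cosh_pos (x := ξ)).ne'
  rw [hS, div_pow, Real.sq_sqrt (by positivity : (0:ℝ) ≤ 2 / lam)]
  field_simp

lemma S_deriv (ξ : ℝ) :
    HasDerivAt S (-(S ξ) * (Real.sinh ξ / Real.cosh ξ)) ξ := by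
  have hc := Real.cosh_pos (x := ξ)
  have h1 : HasDerivAt (fun x => Real.sqrt (2/lam) / Real.cosh x)
      ((0 * Real.cosh ξ - Real.sqrt (2/lam) * Real.sinh ξ) / Real.cosh ξ ^ 2) ξ :=
    (hasDerivAt_const ξ (Real.sqrt (2/lam))).div (Real.hasDerivAt_cosh ξ) (ne_of_gt hc)
  have h2 : (fun x => Real.sqrt (2/lam) / Real.cosh x) = S := by
    funext x; rw [hS]
  rw [h2] at h1
  convert h1 using 1
  rw [hS]
  rw [zero_mul, zero_sub, pow_two]
  field_simp

lemma S_deriv2 (ξ : ℝ) :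
    HasDerivAt (fun x => -(S x) * (Real.sinh x / Real.cosh x)) (S ξ - lam * S ξ ^ 3) ξ := by
  have hc := Real.cosh_pos (x := ξ)
  have htanh : HasDerivAt (fun x => Real.sinh x / Real.cosh x)
      ((Real.cosh ξ * Real.cosh ξ - Real.sinh ξ * Real.sinh ξ) / Real.cosh ξ ^ 2) ξ :=
    (Real.hasDerivAt_sinh ξ).div (Real.hasDerivAt_cosh ξ) (ne_of_gt hc)
  have h1 := ((S_deriv hlam hS ξ).neg.mul htanh)
  refine h1.congr_deriv (Eq.symm ?_)
  have hs2 : lam * S ξ ^ 2 = 2 / Real.cosh ξ ^ 2 := S_sq hlam hS ξ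
  have e1 : S ξ - lam * S ξ ^ 3 = S ξ * (1 - (lam * S ξ ^2)) := by ring
  have hb : Real.sinh ξ * Real.sinh ξ = Real.cosh ξ * Real.cosh ξ - 1 := by
    have := Real.cosh_sq_sub_sinh_sq ξ; nlinarith
  have e3 : Real.sinh ξ ^ 2 = Real.cosh ξ ^2 - 1 := Real.sinh_sq ξ
  rw [e1, hs2]
  field_simp
  simp only [Pi.neg_apply]
  linear_combination (-2 * S ξ) * e3

lemma S_deriv_sq (ξ : ℝ) :
    (-(S ξ) * (Real.sinh ξ / Real.cosh ξ)) ^ 2 = S ξ ^ 2 - lam / 2 * S ξ ^ 4 := by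
  have hc := Real.cosh_pos (x := ξ)
  have hs2 : lam * S ξ ^ 2 = 2 / Real.cosh ξ ^ 2 := S_sq hlam hS ξ
  have e3 : Real.sinh ξ ^ 2 = Real.cosh ξ ^2 - 1 := Real.sinh_sq ξ
  have h0 : (-(S ξ) * (Real.sinh ξ / Real.cosh ξ)) ^ 2
      = S ξ ^2 * (Real.sinh ξ ^2 / Real.cosh ξ ^2) := by
    rw [mul_pow, div_pow]; ring
  have h2 : lam * S ξ ^2 * Real.cosh ξ ^2 = 2 := by
    rw [hs2]; field_simp
  rw [h0, e3]
  have hcne := hc.ne'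
  field_simp
  linear_combination (S ξ ^ 2) * h2

omit hlam in
lemma S_even (ξ : ℝ) : S (-ξ) = S ξ := by rw [hS, hS, Real.cosh_neg]

omit hlam hS in
lemma cosh_tendsto : Tendsto Real.cosh atTop atTop := by
  apply tendsto_atTop_mono (fun x => ?_) (Real.tendsto_exp_atTop.atTop_div_const two_pos)
  rw [Real.cosh_eq]
  have := Real.exp_pos (-x)
  linarith

omit hlam in
lemma S_tendsto : Tendsto S atTop (nhds 0) := by
  have : Tendsto (fun ξ => Real.sqrt (2/lam) / Real.cosh ξ) atTop (nhds 0) :=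
    Tendsto.div_atTop tendsto_const_nhds cosh_tendsto
  convert this using 2
  rw [hS]


include hlam hS

omit hlam hS in
lemma eval_G (Q : ℝ[X]) (y : ℝ) : (X * Q.comp (X ^ 2)).eval y = y * Q.eval (y ^ 2) := by
  simp [eval_comp]

lemma sigma_hasDeriv (G : ℝ[X]) (ξ : ℝ) :
    HasDerivAt (fun x => G.eval (S x))
      (G.derivative.eval (S ξ) * (-(S ξ) * (Real.sinh ξ / Real.cosh ξ))) ξ :=
  (G.hasDerivAt (S ξ)).comp ξ (S_deriv hlam hS ξ)

lemma sigma1_hasDeriv (G : ℝ[X]) (ξ : ℝ) :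
    HasDerivAt (fun x => G.derivative.eval (S x) * (-(S x) * (Real.sinh x / Real.cosh x)))
      (G.derivative.derivative.eval (S ξ) * (S ξ ^ 2 - lam / 2 * S ξ ^ 4)
        + G.derivative.eval (S ξ) * (S ξ - lam * S ξ ^ 3)) ξ := by
  have h := (sigma_hasDeriv hlam hS G.derivative ξ).mul (S_deriv2 hlam hS ξ)
  refine h.congr_deriv (Eq.symm ?_)
  rw [← S_deriv_sq hlam hS ξ]
  ring

lemma second_deriv (G : ℝ[X]) (ξ : ℝ) :
    deriv (deriv (fun x => G.eval (S x))) ξ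
      = G.derivative.derivative.eval (S ξ) * (S ξ ^ 2 - lam / 2 * S ξ ^ 4)
        + G.derivative.eval (S ξ) * (S ξ - lam * S ξ ^ 3) := by
  have h1 : deriv (fun x => G.eval (S x))
      = fun ξ => G.derivative.eval (S ξ) * (-(S ξ) * (Real.sinh ξ / Real.cosh ξ)) :=
    funext fun ξ => (sigma_hasDeriv hlam hS G ξ).deriv
  rw [h1]
  exact (sigma1_hasDeriv hlam hS G ξ).deriv

lemma part1 (Q P : ℝ[X]) (hQ : opA lam Q = X * P) (ξ : ℝ) :
    deriv (deriv (fun x => S x * Q.eval (S x ^ 2))) ξ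
        - S ξ * Q.eval (S ξ ^ 2) + 6 / Real.cosh ξ ^ 2 * (S ξ * Q.eval (S ξ ^ 2))
        = S ξ ^ 3 * P.eval (S ξ ^ 2) := by
  set G : ℝ[X] := X * Q.comp (X ^ 2) with hG
  have hfun : (fun x => S x * Q.eval (S x ^ 2)) = fun x => G.eval (S x) := by
    funext x; rw [hG, eval_G]
  have h6 : 6 / Real.cosh ξ ^ 2 = 3 * (lam * S ξ ^ 2) := by
    rw [S_sq hlam hS ξ]; ring
  have hGe : S ξ * Q.eval (S ξ ^ 2) = G.eval (S ξ) := by rw [hG, eval_G]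
  rw [hfun, second_deriv hlam hS G ξ, h6, hGe]
  have hB := opB lam Q
  have hBe := congrArg (fun p : ℝ[X] => p.eval (S ξ)) hB
  simp only [eval_add, eval_mul, eval_sub, eval_pow, eval_X, eval_C, eval_ofNat,
    eval_comp, eval_one, ← hG, hQ] at hBe
  -- hBe : (2*Sξ^2 - lam*Sξ^4) * G''.eval Sξ + (2*Sξ - 2*lam*Sξ^3) * G'.eval Sξ
  --       + (6*lam*Sξ^2 - 2) * G.eval Sξ = 2*Sξ * ((X*P).eval (Sξ^2))
  have hXP : (X * P : ℝ[X]).eval (S ξ ^ 2) = S ξ ^ 2 * P.eval (S ξ ^ 2) := by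
    simp
  linear_combination hBe / 2

omit hlam hS in
lemma ode_unique {v : ℝ → ℝ × ℝ → ℝ × ℝ} (hv : ∀ t, LipschitzWith 6 (v t))
    {f g : ℝ → ℝ × ℝ} (hf : ∀ t, HasDerivAt f (v t (f t)) t)
    (hg : ∀ t, HasDerivAt g (v t (g t)) t) (h0 : f 0 = g 0) (t : ℝ) : f t = g t := by
  have h1 : (0:ℝ) ∈ Set.Ioo (-(|t|+1)) (|t|+1) := by
    constructor
    · have := abs_nonneg t; linarith
    · have := abs_nonneg t; linarith
  have h2 : t ∈ Set.Ioo (-(|t|+1)) (|t|+1) := by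
    constructor
    · have := neg_abs_le t; linarith
    · have := le_abs_self t; linarith
  exact ODE_solution_unique_of_mem_Ioo (s := fun _ => Set.univ)
    (fun u _ => (hv u).lipschitzOnWith) h1
    (fun u _ => ⟨hf u, trivial⟩) (fun u _ => ⟨hg u, trivial⟩) h0 h2

omit hlam hS in
lemma lips (c : ℝ) (hc : |c| ≤ 5) :
    LipschitzWith 6 (fun p : ℝ × ℝ => (p.2, c * p.1)) := by
  apply LipschitzWith.of_dist_le_mul
  intro p q
  rw [Prod.dist_eq, Prod.dist_eq]
  have hK : ((6:ℝ≥0):ℝ) = (6:ℝ) := by norm_num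
  rw [hK]
  have hd1 : dist p.1 q.1 ≤ max (dist p.1 q.1) (dist p.2 q.2) := le_max_left _ _
  have hd2 : dist p.2 q.2 ≤ max (dist p.1 q.1) (dist p.2 q.2) := le_max_right _ _
  have hnn : (0:ℝ) ≤ max (dist p.1 q.1) (dist p.2 q.2) :=
    le_trans dist_nonneg hd1
  apply max_le
  · simp only
    linarith
  · simp only
    have : dist (c * p.1) (c * q.1) = |c| * dist p.1 q.1 := by
      rw [Real.dist_eq, Real.dist_eq, ← abs_mul]
      congr 1; ring
    rw [this]
    have h5 : |c| * dist p.1 q.1 ≤ 5 * max (dist p.1 q.1) (dist p.2 q.2) := by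
      have := mul_le_mul hc hd1 dist_nonneg (by norm_num : (0:ℝ) ≤ 5)
      linarith
    linarith

omit hlam hS in
lemma coeff_bound (t : ℝ) : |1 - 6 / Real.cosh t ^ 2| ≤ 5 := by
  have h1 : (1:ℝ) ≤ Real.cosh t := Real.one_le_cosh t
  have h2 : (1:ℝ) ≤ Real.cosh t ^ 2 := by nlinarith
  have h3 : (0:ℝ) < Real.cosh t ^ 2 := by linarith
  rw [abs_le]
  constructor
  · have : 6 / Real.cosh t ^ 2 ≤ 6 := by
      rw [div_le_iff₀ h3]; nlinarith
    linarith
  · have : (0:ℝ) ≤ 6 / Real.cosh t ^ 2 := by positivity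
    linarith

lemma part2 (Q P : ℝ[X]) (hQ : opA lam Q = X * P) (f : ℝ → ℝ)
    (hf : ContDiff ℝ 2 f) (heven : ∀ ξ, f (-ξ) = f ξ)
    (htop : Tendsto f atTop (nhds 0))
    (heq : ∀ ξ, deriv (deriv f) ξ - f ξ + 6 / Real.cosh ξ ^ 2 * f ξ
      = S ξ ^ 3 * P.eval (S ξ ^ 2)) :
    ∀ ξ, f ξ = S ξ * Q.eval (S ξ ^ 2) := by
  set G : ℝ[X] := X * Q.comp (X ^ 2) with hG
  set σ : ℝ → ℝ := fun x => G.eval (S x) with hσ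
  set σ1 : ℝ → ℝ := fun x =>
    G.derivative.eval (S x) * (-(S x) * (Real.sinh x / Real.cosh x)) with hσ1
  set σ2 : ℝ → ℝ := fun ξ =>
    G.derivative.derivative.eval (S ξ) * (S ξ ^ 2 - lam / 2 * S ξ ^ 4)
      + G.derivative.eval (S ξ) * (S ξ - lam * S ξ ^ 3) with hσ2def
  have hσd1 : ∀ ξ, HasDerivAt σ (σ1 ξ) ξ := fun ξ => sigma_hasDeriv hlam hS G ξ
  have hσd2 : ∀ ξ, HasDerivAt σ1 (σ2 ξ) ξ := fun ξ => sigma1_hasDeriv hlam hS G ξ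
  have hGe : ∀ y : ℝ, G.eval y = y * Q.eval (y ^ 2) := fun y => by rw [hG, eval_G]
  have hσeq : ∀ ξ, σ2 ξ - σ ξ + 6 / Real.cosh ξ ^ 2 * σ ξ = S ξ ^ 3 * P.eval (S ξ ^ 2) := by
    intro ξ
    have h1 := part1 hlam hS Q P hQ ξ
    have hfunEq : (fun x => S x * Q.eval (S x ^ 2)) = σ := funext fun x => (hGe (S x)).symm
    rw [hfunEq] at h1
    have h2 := second_deriv hlam hS G ξ
    have h3 : S ξ * Q.eval (S ξ ^ 2) = σ ξ := (hGe (S ξ)).symm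
    rw [h3] at h1
    simp only [hσ2def]
    rw [← h2]
    exact h1
  have hfd : Differentiable ℝ f := hf.differentiable (by norm_num)
  have hfd2 : Differentiable ℝ (deriv f) := by
    have h2 : ContDiff ℝ ((1:ℕ∞) + 1) f := by
      convert hf using 2
      norm_num
    have := (contDiff_succ_iff_deriv.mp h2).2.2
    exact this.differentiable (by simp)
  set g : ℝ → ℝ := fun ξ => f ξ - σ ξ with hg
  set g1 : ℝ → ℝ := fun ξ => deriv f ξ - σ1 ξ with hg1
  have hgd1 : ∀ ξ, HasDerivAt g (g1 ξ) ξ := fun ξ => ((hfd ξ).hasDerivAt).sub (hσd1 ξ)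
  have hgd2 : ∀ ξ, HasDerivAt g1 ((1 - 6 / Real.cosh ξ ^ 2) * g ξ) ξ := by
    intro ξ
    have h := ((hfd2 ξ).hasDerivAt).sub (hσd2 ξ)
    refine h.congr_deriv (Eq.symm ?_)
    have e1 := heq ξ
    have e2 := hσeq ξ
    have hgval : g ξ = f ξ - σ ξ := rfl
    rw [hgval]
    linear_combination e2 - e1
  have hgeven : ∀ ξ, g (-ξ) = g ξ := by
    intro ξ
    have : σ (-ξ) = σ ξ := by rw [hσ]; simp only; rw [S_even hS ξ]
    simp only [hg]
    rw [heven ξ, this]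
  have hg10 : g1 0 = 0 := by
    have h1 : HasDerivAt g (g1 0) 0 := hgd1 0
    have hneg : HasDerivAt (fun x : ℝ => -x) (-1) (0:ℝ) := by
      exact (hasDerivAt_id (0:ℝ)).neg
    have h3 : HasDerivAt g (g1 0) (-(0:ℝ)) := by rw [neg_zero]; exact hgd1 0
    have h2 : HasDerivAt (fun x => g (-x)) (-(g1 0)) 0 := by
      have h4 := HasDerivAt.comp (0:ℝ) h3 hneg
      exact h4.congr_deriv (by ring)
    have hfeq : (fun x => g (-x)) = g := funext fun x => hgeven x
    rw [hfeq] at h2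
    have := h1.unique h2
    linarith
  set v : ℝ → ℝ × ℝ → ℝ × ℝ := fun t p => (p.2, (1 - 6 / Real.cosh t ^ 2) * p.1) with hv
  have hvLip : ∀ t, LipschitzWith 6 (v t) := fun t => lips _ (coeff_bound t)
  set w : ℝ → ℝ × ℝ := fun t => (g t, g1 t) with hw
  set z : ℝ → ℝ × ℝ := fun t => (g 0 * Ufun t, g 0 * Vfun t) with hz
  have hwd : ∀ t, HasDerivAt w (v t (w t)) t := fun t => (hgd1 t).prodMk (hgd2 t)
  have hzd : ∀ t, HasDerivAt z (v t (z t)) t := by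
    intro t
    have h1 := (Ufun_hasDeriv t).const_mul (g 0)
    have h2 := (Vfun_hasDeriv t).const_mul (g 0)
    have h3 := h1.prodMk h2
    convert h3 using 1
    have : v t (z t) = (g 0 * Vfun t, (1 - 6 / Real.cosh t ^ 2) * (g 0 * Ufun t)) := rfl
    rw [this]
    exact Prod.ext rfl (by ring)
  have hwz0 : w 0 = z 0 := by
    rw [hw, hz]
    simp only
    rw [hg10, Ufun_zero, Vfun_zero]
    norm_num
  have hgU : ∀ t, g t = g 0 * Ufun t := fun t =>
    congrArg Prod.fst (ode_unique hvLip hwd hzd hwz0 t)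
  have hσtop : Tendsto σ atTop (nhds 0) := by
    have hcont := (Polynomial.continuous G).tendsto 0
    have h := hcont.comp (S_tendsto hS)
    have hG0 : G.eval 0 = 0 := by rw [hGe]; ring
    rw [hG0] at h
    exact h
  have hgtop : Tendsto g atTop (nhds 0) := by
    have := htop.sub hσtop
    simpa using this
  have hg0 : g 0 = 0 := by
    by_contra hne
    rcases lt_or_gt_of_ne hne with hlt | hgt
    · have hT : Tendsto (fun t => g 0 * Ufun t) atTop atTop :=
        Ufun_tendsto.const_mul_atBot_of_neg hlt
      have hT2 : Tendsto g atTop atTop := hT.congr (fun x => (hgU x).symm)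
      exact not_tendsto_nhds_of_tendsto_atTop hT2 0 hgtop
    · have hT : Tendsto (fun t => g 0 * Ufun t) atTop atBot :=
        Ufun_tendsto.const_mul_atBot hgt
      have hT2 : Tendsto g atTop atBot := hT.congr (fun x => (hgU x).symm)
      exact not_tendsto_nhds_of_tendsto_atBot hT2 0 hgtop
  intro ξ
  have := hgU ξ
  rw [hg0, zero_mul] at this
  have hfσ : f ξ = σ ξ := by
    have hgval : g ξ = f ξ - σ ξ := rfl
    rw [hgval] at this
    linarith
  rw [hfσ, hσ]
  simp only
  rw [hGe]

end L5

/-- Let `λ > 0`, `S(ξ) = √(2/λ)/cosh ξ`, and `P` a real polynomial. Then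
(i) there is a real polynomial `Q` such that `σ(ξ) := S(ξ)·Q(S(ξ)²)` satisfies
`σ'' − σ + (6/cosh²ξ)·σ = S³·P(S²)` on `ℝ`; and (ii) any `C²` even function tending to `0`
at `±∞` satisfying the same equation equals `σ`. -/
theorem L_inverse_on_odd_polynomials (lam : ℝ) (hlam : 0 < lam) (S : ℝ → ℝ)
    (hS : ∀ ξ, S ξ = Real.sqrt (2 / lam) / Real.cosh ξ) (P : Polynomial ℝ) :
    ∃ Q : Polynomial ℝ,
      (∀ ξ, deriv (deriv (fun x => S x * Q.eval (S x ^ 2))) ξ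
          - S ξ * Q.eval (S ξ ^ 2) + 6 / Real.cosh ξ ^ 2 * (S ξ * Q.eval (S ξ ^ 2))
          = S ξ ^ 3 * P.eval (S ξ ^ 2)) ∧
      (∀ σ' : ℝ → ℝ, ContDiff ℝ 2 σ' → (∀ ξ, σ' (-ξ) = σ' ξ) →
        Filter.Tendsto σ' Filter.atTop (nhds 0) → Filter.Tendsto σ' Filter.atBot (nhds 0) →
        (∀ ξ, deriv (deriv σ') ξ - σ' ξ + 6 / Real.cosh ξ ^ 2 * σ' ξ
            = S ξ ^ 3 * P.eval (S ξ ^ 2)) →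
        ∀ ξ, σ' ξ = S ξ * Q.eval (S ξ ^ 2)) := by
  obtain ⟨Q, hQ⟩ := L5.exists_Q lam hlam.ne' P.natDegree P le_rfl
  refine ⟨Q, fun ξ => L5.part1 hlam hS Q P hQ ξ, ?_⟩
  intro f hf heven htop _hbot heq
  exact L5.part2 hlam hS Q P hQ f hf heven htop heq
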